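/- If B and A are sequences of integers with cost(B) < 0 ≤ cost(A), then for any sequences S₁, S₂, height(S₁ B A S₂) ≤ height(S₁ A B S₂). -/

import Mathlib

def cost (L : List ℤ) : ℤ := L.sum

def height (L : List ℤ) : ℤ :=
  ((List.range (L.length + 1)).map fun k => (L.take k).sum).foldr max 0

def fall (L : List ℤ) : ℤ := height L - cost L

private lemma foldr_max_shift (a : ℤ) : ∀ (xs : List ℤ) (b : ℤ),
    List.foldr max (a + b) (xs.map (a + ·)) = a + List.foldr max b xs := by
  intro xs
  induction xs with
  | nil => intro b; simp
  | cons x xs ih =>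
      intro b
      simp only [List.map_cons, List.foldr_cons, ih, max_add_add_left]

private lemma foldr_max_comm (a b : ℤ) : ∀ (xs : List ℤ),
    max a (List.foldr max b xs) = max b (List.foldr max a xs) := by
  intro xs
  induction xs with
  | nil => exact max_comm a b
  | cons x xs ih =>
      simp only [List.foldr_cons]
      rw [max_left_comm, ih, max_left_comm]

private lemma le_foldr_max : ∀ (xs : List ℤ) (b : ℤ), b ≤ List.foldr max b xs := by
  intro xs
  induction xs with
  | nil => intro b; exact le_rfl
  | cons x xs ih => intro b; exact (ih b).trans (le_max_right _ _)

private lemma mem_le_foldr_max {x : ℤ} : ∀ {xs : List ℤ} (b : ℤ), x ∈ xs →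
    x ≤ List.foldr max b xs := by
  intro xs
  induction xs with
  | nil => intro b h; simp at h
  | cons y xs ih =>
      intro b h
      rcases List.mem_cons.mp h with h | h
      · subst h; exact le_max_left _ _
      · exact (ih b h).trans (le_max_right _ _)

lemma height_nil : height ([] : List ℤ) = 0 := by
  simp [height]

lemma height_cons (a : ℤ) (l : List ℤ) :
    height (a :: l) = max 0 (a + height l) := by
  unfold height
  have hrange : List.range (l.length + 1 + 1)
      = 0 :: (List.range (l.length + 1)).map Nat.succ :=
    List.range_succ_eq_map
  rw [show (a :: l).length = l.length + 1 from rfl, hrange]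
  simp only [List.map_cons, List.map_map, List.take_zero, List.sum_nil,
    List.foldr_cons]
  have hmap : (List.range (l.length + 1)).map
      ((fun k => ((a :: l).take k).sum) ∘ Nat.succ)
      = ((List.range (l.length + 1)).map (fun k => (l.take k).sum)).map
        (a + ·) := by
    rw [List.map_map]
    apply List.map_congr_left
    intro k _
    simp [List.take_succ_cons]
  rw [hmap]
  set P := (List.range (l.length + 1)).map (fun k => (l.take k).sum) with hP
  set M := P.map (a + ·) with hM
  have hshift := foldr_max_shift a P 0
  rw [add_zero] at hshift
  have haM : a ∈ M := by
    have h0 : (0 : ℤ) ∈ P := by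
      rw [hP]
      refine List.mem_map.mpr ⟨0, ?_, by simp⟩
      simp
    rw [hM]
    exact List.mem_map.mpr ⟨0, h0, by simp⟩
  have hF0 : (0 : ℤ) ≤ List.foldr max 0 M := le_foldr_max M 0
  have haF : a ≤ List.foldr max 0 M := mem_le_foldr_max 0 haM
  rw [← hshift, foldr_max_comm 0 a M, max_eq_right hF0, max_eq_right haF]

lemma height_nonneg (l : List ℤ) : 0 ≤ height l := by
  induction l with
  | nil => simp [height_nil]
  | cons a l ih => rw [height_cons]; exact le_max_left _ _

lemma height_append (X Y : List ℤ) :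
    height (X ++ Y) = max (height X) (cost X + height Y) := by
  induction X with
  | nil => simp [height_nil, cost, max_eq_right (height_nonneg Y)]
  | cons a X ih =>
      simp only [List.cons_append, height_cons, ih, cost, List.sum_cons]
      rw [← max_add_add_left, ← add_assoc]
      exact (max_assoc _ _ _).symm

theorem exchange_neg_nonneg (B A S₁ S₂ : List ℤ)
    (hB : cost B < 0) (hA : 0 ≤ cost A) :
    height (S₁ ++ B ++ A ++ S₂) ≤ height (S₁ ++ A ++ B ++ S₂) := by
  have e1 : S₁ ++ B ++ A ++ S₂ = S₁ ++ ((B ++ A) ++ S₂) := by simp [List.append_assoc]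
  have e2 : S₁ ++ A ++ B ++ S₂ = S₁ ++ ((A ++ B) ++ S₂) := by simp [List.append_assoc]
  rw [e1, e2, height_append, height_append, height_append, height_append,
    height_append, height_append]
  have hBA : cost (B ++ A) = cost B + cost A := by simp [cost]
  have hAB : cost (A ++ B) = cost A + cost B := by simp [cost]
  rw [hBA, hAB]
  have inner : max (max (height B) (cost B + height A)) (cost B + cost A + height S₂)
      ≤ max (max (height A) (cost A + height B)) (cost A + cost B + height S₂) := by
    apply max_le
    · apply max_le
      · calc height B ≤ cost A + height B := by linarith
          _ ≤ _ := (le_max_right _ _).trans (le_max_left _ _)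
      · calc cost B + height A ≤ height A := by linarith
          _ ≤ _ := (le_max_left _ _).trans (le_max_left _ _)
    · calc cost B + cost A + height S₂ = cost A + cost B + height S₂ := by ring
        _ ≤ _ := le_max_right _ _
  exact max_le_max le_rfl (add_le_add le_rfl inner)
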